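/- Let I be a nonzero ideal of ℤ[ζ] with norm N(I) = |ℤ[ζ]/I|. If z and w both lie in the ideal 2I (the product of the ideal (2) with I), then (1/4)·Tr(z·w̄/√-3) is an integer divisible by N(I). -/

import Mathlib

open Matrix Complex
open scoped ComplexOrder

noncomputable section

/-- `SLC n` is the special linear group of `n × n` complex matrices. -/
abbrev SLC (n : ℕ) := Matrix.SpecialLinearGroup (Fin n) ℂ

/-- The standard Hermitian matrix of signature `(d,1)` used to define `SU(d,1)`:
`J_{1,d+1} = J_{d+1,1} = 1`, `J_{i,i} = 1` for `2 ≤ i ≤ d` (1-indexed), and `0` otherwise. -/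
def Jmat (d : ℕ) : Matrix (Fin (d+1)) (Fin (d+1)) ℂ :=
  Matrix.of fun i j =>
    if (i = 0 ∧ j = Fin.last d) ∨ (i = Fin.last d ∧ j = 0) then 1
    else if i = j ∧ i ≠ 0 ∧ i ≠ Fin.last d then 1 else 0

/-- `SU(d,1)`, realised as the subgroup of `SL_{d+1}(ℂ)` preserving the Hermitian
form given by `Jmat d`. -/
def SUd1 (d : ℕ) : Subgroup (SLC (d+1)) where
  carrier := {g | (↑g : Matrix (Fin (d+1)) (Fin (d+1)) ℂ)ᴴ * Jmat d * ↑g = Jmat d}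
  one_mem' := by simp
  mul_mem' := by
    intro a b ha hb
    simp only [Set.mem_setOf_eq] at ha hb ⊢
    rw [Matrix.SpecialLinearGroup.coe_mul, Matrix.conjTranspose_mul]
    calc (↑b)ᴴ * (↑a)ᴴ * Jmat d * ((↑a : Matrix (Fin (d+1)) (Fin (d+1)) ℂ) * ↑b)
        = (↑b)ᴴ * ((↑a : Matrix (Fin (d+1)) (Fin (d+1)) ℂ)ᴴ * Jmat d * ↑a) * ↑b := by
          simp only [Matrix.mul_assoc]
      _ = Jmat d := by rw [ha]; exact hb
  inv_mem' := by
    intro a ha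
    simp only [Set.mem_setOf_eq] at ha ⊢
    set A : Matrix (Fin (d+1)) (Fin (d+1)) ℂ := ↑a with hA
    set B : Matrix (Fin (d+1)) (Fin (d+1)) ℂ := ↑(a⁻¹) with hB
    have h1 : A * B = 1 := by
      rw [hA, hB, ← Matrix.SpecialLinearGroup.coe_mul, mul_inv_cancel]
      simp
    calc Bᴴ * Jmat d * B
        = Bᴴ * (Aᴴ * Jmat d * A) * B := by rw [ha]
      _ = (A * B)ᴴ * Jmat d * (A * B) := by
          rw [Matrix.conjTranspose_mul]; simp only [Matrix.mul_assoc]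
      _ = Jmat d := by rw [h1]; simp

/-- The Hermitian form `⟨v,w⟩ = conj(v)ᵀ J w` on `ℂ^{d+1}`. -/
def Hform (d : ℕ) (v w : Fin (d+1) → ℂ) : ℂ := star v ⬝ᵥ (Jmat d *ᵥ w)

/-- The symmetric space `ℋ = {τ ∈ ℂ^d : ⟨(τ;1),(τ;1)⟩ < 0}`. -/
def Hdom (d : ℕ) : Set (Fin d → ℂ) :=
  {τ | Hform d (Fin.snoc τ 1) (Fin.snoc τ 1) < 0}

/-- The automorphy factor `j(g,τ) = Cτ + D`. -/
def jfun (d : ℕ) (g : Matrix (Fin (d+1)) (Fin (d+1)) ℂ) (τ : Fin d → ℂ) : ℂ :=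
  (g *ᵥ Fin.snoc τ 1) (Fin.last d)

/-- The action `g*τ = (Cτ+D)⁻¹ (Aτ+B)` of `SU(d,1)` on `ℋ`. -/
def actH (d : ℕ) (g : Matrix (Fin (d+1)) (Fin (d+1)) ℂ) (τ : Fin d → ℂ) : Fin d → ℂ :=
  fun k => (g *ᵥ Fin.snoc τ 1) (Fin.castSucc k) / jfun d g τ

open scoped Classical in
/-- `X(g) = -g_{d+1,1}` if `g_{d+1,1} ≠ 0`, and `g_{d+1,d+1}` otherwise. -/
def Xfun (d : ℕ) (g : Matrix (Fin (d+1)) (Fin (d+1)) ℂ) : ℂ :=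
  if g (Fin.last d) 0 = 0 then g (Fin.last d) (Fin.last d) else -(g (Fin.last d) 0)

/-- The branch `j̃(g,τ) = Log(j(g,τ)/X(g)) + Log(X(g))` of the logarithm of `j(g,τ)`,
where `Log` is the principal branch (imaginary part in `(-π, π]`). -/
def jtilde (d : ℕ) (g : Matrix (Fin (d+1)) (Fin (d+1)) ℂ) (τ : Fin d → ℂ) : ℂ :=
  Complex.log (jfun d g τ / Xfun d g) + Complex.log (Xfun d g)

/-- A base point of `ℋ` (for `d ≥ 1`). -/
def baseTau (d : ℕ) : Fin d → ℂ := fun i => if (i : ℕ) = 0 then -1 else 0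

/-- The 2-cocycle `σ(g,h) = (1/(2πi))(j̃(gh,τ) − j̃(g,h*τ) − j̃(h,τ))`, evaluated at the
base point of `ℋ` (as proved in the paper, the value is an integer and does not depend
on the choice of `τ ∈ ℋ`). -/
def sigmaC (d : ℕ) (g h : Matrix (Fin (d+1)) (Fin (d+1)) ℂ) : ℂ :=
  (jtilde d (g * h) (baseTau d) - jtilde d g (actH d h (baseTau d)) - jtilde d h (baseTau d)) /
    (2 * Real.pi * Complex.I)

/-- The integer-valued 2-cocycle `σ` on `SU(d,1)` classifying its universal cover. -/
def sigmaZ (d : ℕ) (g h : Matrix (Fin (d+1)) (Fin (d+1)) ℂ) : ℤ := round (sigmaC d g h).re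

/-- The primitive cube root of unity `ζ = e^{2πi/3}`. -/
def zeta3 : ℂ := Complex.exp (2 * Real.pi * Complex.I / 3)

lemma zeta3_pow_three : zeta3 ^ 3 = 1 := by
  rw [zeta3, ← Complex.exp_nat_mul]
  rw [show (3 : ℕ) * (2 * ↑Real.pi * Complex.I / 3) = 2 * ↑Real.pi * Complex.I by
    push_cast; ring]
  exact Complex.exp_two_pi_mul_I

lemma zeta3_ne_one : zeta3 ≠ 1 := by
  have him : zeta3.im = Real.sin (2 * Real.pi / 3) := by
    rw [zeta3, show 2 * (Real.pi : ℂ) * Complex.I / 3 = (2 * Real.pi / 3 : ℝ) * Complex.I by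
      push_cast; ring]
    rw [Complex.exp_ofReal_mul_I_im]
  have hpos : 0 < Real.sin (2 * Real.pi / 3) := by
    apply Real.sin_pos_of_pos_of_lt_pi
    · positivity
    · nlinarith [Real.pi_pos]
  intro h
  rw [h] at him
  simp only [Complex.one_im] at him
  linarith

lemma zeta3_quad : zeta3 ^ 2 + zeta3 + 1 = 0 := by
  have h : (zeta3 - 1) * (zeta3 ^ 2 + zeta3 + 1) = 0 := by
    have : (zeta3 - 1) * (zeta3 ^ 2 + zeta3 + 1) = zeta3 ^ 3 - 1 := by ring
    rw [this, zeta3_pow_three, sub_self]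
  rcases mul_eq_zero.mp h with h1 | h2
  · exact absurd (sub_eq_zero.mp h1) zeta3_ne_one
  · exact h2

lemma zeta3_conj : starRingEnd ℂ zeta3 = zeta3 ^ 2 := by
  have habs : ‖zeta3‖ = 1 := by
    rw [zeta3, show 2 * (Real.pi : ℂ) * Complex.I / 3 = (2 * Real.pi / 3 : ℝ) * Complex.I by
      push_cast; ring]
    exact Complex.norm_exp_ofReal_mul_I _
  have h1 : starRingEnd ℂ zeta3 * zeta3 = 1 := by
    rw [mul_comm, Complex.mul_conj, Complex.normSq_eq_norm_sq, habs]; norm_num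
  have h2 : zeta3 ^ 2 * zeta3 = 1 := by
    rw [← pow_succ, zeta3_pow_three]
  have hz : zeta3 ≠ 0 := by
    intro h
    rw [h] at habs; simp at habs
  exact mul_right_cancel₀ hz (h1.trans h2.symm)

/-- The ring of Eisenstein integers `ℤ[ζ]`, as a subring of `ℂ`. -/
def Eis : Subring ℂ := Subring.closure {zeta3}

lemma zeta3_mem_Eis : zeta3 ∈ Eis := Subring.subset_closure rfl

lemma Eis_conj_mem {x : ℂ} (hx : x ∈ Eis) : starRingEnd ℂ x ∈ Eis := by
  induction hx using Subring.closure_induction with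
  | mem y hy =>
      rcases hy with rfl
      rw [zeta3_conj]
      exact pow_mem zeta3_mem_Eis 2
  | zero => simpa using Eis.zero_mem
  | one => simpa using Eis.one_mem
  | add a b _ _ ha hb => rw [map_add]; exact Eis.add_mem ha hb
  | neg a _ ha => rw [map_neg]; exact Eis.neg_mem ha
  | mul a b _ _ ha hb => rw [_root_.map_mul]; exact Eis.mul_mem ha hb

/-- The square root `√-3 = 2ζ + 1` of `-3` in `ℤ[ζ]`. -/
def sqrt3 : ℂ := 2 * zeta3 + 1

lemma sqrt3_mem_Eis : sqrt3 ∈ Eis := by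
  refine Eis.add_mem (Eis.mul_mem ?_ zeta3_mem_Eis) Eis.one_mem
  rw [show (2 : ℂ) = 1 + 1 by norm_num]
  exact Eis.add_mem Eis.one_mem Eis.one_mem

lemma sqrt3_sq : sqrt3 * sqrt3 = -3 := by
  have h := zeta3_quad
  rw [sqrt3]; ring_nf; linear_combination 4 * h

/-! ### Auxiliary development: the Eisenstein integers as a lattice -/

lemma zeta3_sq : zeta3 ^ 2 = -1 - zeta3 := by linear_combination zeta3_quad

lemma zeta3_ne_zero : zeta3 ≠ 0 := by
  intro h
  have := zeta3_pow_three
  rw [h] at this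
  norm_num at this

lemma zeta3_mul_conj : zeta3 * starRingEnd ℂ zeta3 = 1 := by
  rw [zeta3_conj, ← pow_succ']
  exact zeta3_pow_three

lemma zeta3_re : zeta3.re = -1/2 := by
  have h : zeta3 + starRingEnd ℂ zeta3 = -1 := by
    rw [zeta3_conj]; linear_combination zeta3_quad
  have h2 : (2 : ℝ) * zeta3.re = -1 := by
    have := Complex.add_conj zeta3
    rw [h] at this
    have := congrArg Complex.re this.symm
    simpa using this
  linarith

lemma zeta3_normSq : Complex.normSq zeta3 = 1 := by
  have h := zeta3_mul_conj
  rw [Complex.mul_conj] at h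
  exact_mod_cast congrArg Complex.re h

lemma zeta3_im_sq : zeta3.im ^ 2 = 3/4 := by
  have h := zeta3_normSq
  rw [Complex.normSq_apply, zeta3_re] at h
  nlinarith

lemma zeta3_im_ne : zeta3.im ≠ 0 := by
  intro h
  have := zeta3_im_sq
  rw [h] at this
  norm_num at this

/-- `a + b ζ` as a complex number. -/
def mk2 (a b : ℤ) : ℂ := (a : ℂ) + (b : ℂ) * zeta3

lemma mk2_mem (a b : ℤ) : mk2 a b ∈ Eis := by
  exact Eis.add_mem (intCast_mem Eis a) (Eis.mul_mem (intCast_mem Eis b) zeta3_mem_Eis)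

lemma mk2_re (a b : ℤ) : (mk2 a b).re = (a : ℝ) + (b : ℝ) * zeta3.re := by
  simp [mk2, Complex.add_re, Complex.mul_re]

lemma mk2_im (a b : ℤ) : (mk2 a b).im = (b : ℝ) * zeta3.im := by
  simp [mk2, Complex.add_im, Complex.mul_im]

lemma mk2_inj {a b a' b' : ℤ} (h : mk2 a b = mk2 a' b') : a = a' ∧ b = b' := by
  have him : (b : ℝ) * zeta3.im = (b' : ℝ) * zeta3.im := by
    rw [← mk2_im a b, ← mk2_im a' b', h]
  have hb : (b : ℝ) = (b' : ℝ) := mul_right_cancel₀ zeta3_im_ne him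
  have hb' : b = b' := by exact_mod_cast hb
  subst hb'
  have hre : (a : ℝ) = (a' : ℝ) := by
    have h1 := mk2_re a b
    have h2 := mk2_re a' b
    rw [h] at h1
    rw [h2] at h1
    linarith
  exact ⟨by exact_mod_cast hre, rfl⟩

lemma mk2_add (a b c d : ℤ) : mk2 a b + mk2 c d = mk2 (a + c) (b + d) := by
  rw [mk2, mk2, mk2]; push_cast; ring

lemma mk2_neg (a b : ℤ) : -mk2 a b = mk2 (-a) (-b) := by
  rw [mk2, mk2]; push_cast; ring

lemma mk2_mul (a b c d : ℤ) :
    mk2 a b * mk2 c d = mk2 (a * c - b * d) (a * d + b * c - b * d) := by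
  rw [mk2, mk2, mk2]; push_cast
  linear_combination ((b : ℂ) * (d : ℂ)) * zeta3_quad

lemma mk2_conj (a b : ℤ) : starRingEnd ℂ (mk2 a b) = mk2 (a - b) (-b) := by
  rw [mk2, mk2, map_add, _root_.map_mul, zeta3_conj]
  simp only [map_intCast]
  push_cast
  linear_combination (b : ℂ) * zeta3_quad

lemma exists_rep {x : ℂ} (hx : x ∈ Eis) : ∃ a b : ℤ, x = mk2 a b := by
  induction hx using Subring.closure_induction with
  | mem y hy =>
      rcases hy with rfl
      exact ⟨0, 1, by simp [mk2]⟩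
  | zero => exact ⟨0, 0, by simp [mk2]⟩
  | one => exact ⟨1, 0, by simp [mk2]⟩
  | add u v _ _ hu hv =>
      obtain ⟨a, b, rfl⟩ := hu
      obtain ⟨c, d, rfl⟩ := hv
      exact ⟨a + c, b + d, mk2_add a b c d⟩
  | neg u _ hu =>
      obtain ⟨a, b, rfl⟩ := hu
      exact ⟨-a, -b, mk2_neg a b⟩
  | mul u v _ _ hu hv =>
      obtain ⟨a, b, rfl⟩ := hu
      obtain ⟨c, d, rfl⟩ := hv
      exact ⟨_, _, mk2_mul a b c d⟩

/-- The additive hom `(a,b) ↦ a + bζ` into `Eis`. -/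
def eisHom : (Fin 2 → ℤ) →+ ↥Eis :=
  AddMonoidHom.mk' (fun v => ⟨mk2 (v 0) (v 1), mk2_mem _ _⟩)
    (fun u v => by
      apply Subtype.ext
      show mk2 (u 0 + v 0) (u 1 + v 1) = mk2 (u 0) (u 1) + mk2 (v 0) (v 1)
      rw [mk2_add])

lemma eisHom_bijective : Function.Bijective eisHom := by
  constructor
  · intro u v h
    have h' : mk2 (u 0) (u 1) = mk2 (v 0) (v 1) := congrArg Subtype.val h
    obtain ⟨h0, h1⟩ := mk2_inj h'
    funext i
    fin_cases i <;> assumption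
  · intro x
    obtain ⟨a, b, hab⟩ := exists_rep x.2
    refine ⟨![a, b], Subtype.ext ?_⟩
    show mk2 (![a, b] 0) (![a, b] 1) = (x : ℂ)
    simpa using hab.symm

/-- `(a,b) ↦ a + bζ` as a `ℤ`-linear equivalence. -/
def eisEquiv : (Fin 2 → ℤ) ≃ₗ[ℤ] ↥Eis :=
  LinearEquiv.ofBijective eisHom.toIntLinearMap eisHom_bijective

/-- The `ℤ`-basis `{1, ζ}` of `Eis`. -/
def eisBasis : Module.Basis (Fin 2) ℤ ↥Eis := Module.Basis.ofEquivFun eisEquiv.symm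

instance : Module.Free ℤ ↥Eis := Module.Free.of_basis eisBasis
instance : Module.Finite ℤ ↥Eis := Module.Finite.of_basis eisBasis

lemma eisBasis_repr (x : ↥Eis) (a b : ℤ) (h : (x : ℂ) = mk2 a b) :
    ∀ i, eisBasis.repr x i = ![a, b] i := by
  have hx : eisEquiv ![a, b] = x := by
    apply Subtype.ext
    show mk2 (![a, b] 0) (![a, b] 1) = (x : ℂ)
    simpa using h.symm
  intro i
  rw [eisBasis, Module.Basis.ofEquivFun_repr_apply, ← hx, LinearEquiv.symm_apply_apply]

lemma eisBasis_coe : ∀ j, ((eisBasis j : ↥Eis) : ℂ) = mk2 (![1, 0] j) (![0, 1] j) := by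
  intro j
  have h : eisBasis.repr (eisBasis j) = Finsupp.single j 1 := eisBasis.repr_self j
  obtain ⟨a, b, hab⟩ := exists_rep (eisBasis j).2
  have := eisBasis_repr (eisBasis j) a b hab
  rw [h] at this
  have h0 := this 0
  have h1 := this 1
  fin_cases j <;>
    simp only [Finsupp.single_apply, Matrix.cons_val_zero, Matrix.cons_val_one,
      Matrix.head_cons] at h0 h1 ⊢ <;>
    · rw [hab]
      norm_num at h0 h1 ⊢
      rw [← h0, ← h1]

lemma eis_norm (x : ↥Eis) (a b : ℤ) (h : (x : ℂ) = mk2 a b) :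
    Algebra.norm ℤ x = a ^ 2 - a * b + b ^ 2 := by
  rw [Algebra.norm_eq_matrix_det eisBasis x, Matrix.det_fin_two]
  have hb0 : ((eisBasis 0 : ↥Eis) : ℂ) = mk2 1 0 := by simpa using eisBasis_coe 0
  have hb1 : ((eisBasis 1 : ↥Eis) : ℂ) = mk2 0 1 := by simpa using eisBasis_coe 1
  have hx0 : ((x * eisBasis 0 : ↥Eis) : ℂ) = mk2 a b := by
    push_cast [hb0, h]
    rw [mk2_mul]; norm_num
  have hx1 : ((x * eisBasis 1 : ↥Eis) : ℂ) = mk2 (-b) (a - b) := by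
    push_cast [hb1, h]
    rw [mk2_mul]; norm_num
  have r0 := eisBasis_repr _ _ _ hx0
  have r1 := eisBasis_repr _ _ _ hx1
  rw [Algebra.leftMulMatrix_eq_repr_mul, Algebra.leftMulMatrix_eq_repr_mul,
    Algebra.leftMulMatrix_eq_repr_mul, Algebra.leftMulMatrix_eq_repr_mul,
    r0 0, r0 1, r1 0, r1 1]
  simp only [Matrix.cons_val_zero, Matrix.cons_val_one, Matrix.head_cons]
  ring

lemma eis_normSq (a b : ℤ) :
    Complex.normSq (mk2 a b) = ((a ^ 2 - a * b + b ^ 2 : ℤ) : ℝ) := by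
  rw [Complex.normSq_apply, mk2_re, mk2_im, zeta3_re]
  have h := zeta3_im_sq
  push_cast
  nlinarith [h]

lemma eis_norm_nonneg (a b : ℤ) : 0 ≤ a ^ 2 - a * b + b ^ 2 := by
  nlinarith [sq_nonneg (a - b), sq_nonneg a, sq_nonneg b]

/-- Every element of `ℂ` is within distance `< 1` of an Eisenstein integer. -/
lemma exists_near (c : ℂ) : ∃ q : ℂ, q ∈ Eis ∧ Complex.normSq (c - q) < 1 := by
  set b' : ℝ := c.im / zeta3.im with hb'
  set a' : ℝ := c.re - b' * zeta3.re with ha'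
  refine ⟨mk2 (round a') (round b'), mk2_mem _ _, ?_⟩
  set s : ℝ := a' - round a' with hs
  set t : ℝ := b' - round b' with ht
  have hre : (c - mk2 (round a') (round b')).re = s + t * zeta3.re := by
    rw [Complex.sub_re, mk2_re, hs, ht, ha']
    ring
  have him : (c - mk2 (round a') (round b')).im = t * zeta3.im := by
    have h0 := zeta3_im_ne
    rw [Complex.sub_im, mk2_im, ht, hb']
    field_simp
  rw [Complex.normSq_apply, hre, him]
  have hs2 : |s| ≤ 1/2 := abs_sub_round a'
  have ht2 : |t| ≤ 1/2 := abs_sub_round b'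
  have hs2' := abs_le.mp hs2
  have ht2' := abs_le.mp ht2
  have hs3 : s^2 ≤ 1/4 := by nlinarith [hs2'.1, hs2'.2]
  have ht3 : t^2 ≤ 1/4 := by nlinarith [ht2'.1, ht2'.2]
  have hst : s * t ≤ 1/4 ∧ -(1/4) ≤ s * t := by
    constructor <;> nlinarith [sq_nonneg (s - t), sq_nonneg (s + t)]
  have him2 := zeta3_im_sq
  rw [zeta3_re]
  nlinarith [him2, hst.1, hst.2]

/-- Eisenstein integers have a nonnegative integer square-norm. -/
lemma eis_natNorm (x : ↥Eis) : ∃ n : ℕ, Complex.normSq (x : ℂ) = (n : ℝ) := by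
  obtain ⟨a, b, hab⟩ := exists_rep x.2
  refine ⟨(a ^ 2 - a * b + b ^ 2).toNat, ?_⟩
  rw [hab, eis_normSq]
  exact_mod_cast congrArg (Int.cast : ℤ → ℝ) (Int.toNat_of_nonneg (eis_norm_nonneg a b)).symm

lemma eis_principal (I : Ideal ↥Eis) : Submodule.IsPrincipal I := by
  by_cases hI : I = ⊥
  · refine ⟨0, ?_⟩
    rw [hI]
    exact (Submodule.span_zero_singleton _).symm
  obtain ⟨y₀, hy₀I, hy₀⟩ := Submodule.exists_mem_ne_zero_of_ne_bot hI
  set S : Set ℕ := {n | ∃ x ∈ I, x ≠ 0 ∧ Complex.normSq (x : ℂ) = (n : ℝ)} with hS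
  have hSne : S.Nonempty := by
    obtain ⟨n, hn⟩ := eis_natNorm y₀
    exact ⟨n, y₀, hy₀I, hy₀, hn⟩
  obtain ⟨x, hxI, hx0, hxn⟩ := Nat.sInf_mem hSne
  have hxC : (x : ℂ) ≠ 0 := by
    intro h
    exact hx0 (Subtype.ext h)
  refine ⟨x, le_antisymm ?_ ?_⟩
  · intro y hy
    obtain ⟨q, hq, hnear⟩ := exists_near ((y : ℂ) / (x : ℂ))
    set qE : ↥Eis := ⟨q, hq⟩ with hqE
    have hrI : y - qE * x ∈ I := I.sub_mem hy (I.mul_mem_left qE hxI)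
    have hrC : ((y - qE * x : ↥Eis) : ℂ) = (x : ℂ) * ((y : ℂ) / (x : ℂ) - q) := by
      push_cast
      field_simp
      ring
    have hrlt : Complex.normSq ((y - qE * x : ↥Eis) : ℂ) < Complex.normSq (x : ℂ) := by
      rw [hrC, Complex.normSq_mul]
      have hpos : 0 < Complex.normSq (x : ℂ) := Complex.normSq_pos.2 hxC
      nlinarith [Complex.normSq_nonneg ((y : ℂ) / (x : ℂ) - q)]
    have hr0 : y - qE * x = 0 := by
      by_contra hr
      obtain ⟨m, hm⟩ := eis_natNorm (y - qE * x)
      have hmS : m ∈ S := ⟨y - qE * x, hrI, hr, hm⟩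
      have h2 : sInf S ≤ m := Nat.sInf_le hmS
      rw [hm, hxn] at hrlt
      exact absurd (Nat.cast_lt.mp hrlt) (Nat.not_lt.mpr h2)
    have : y = qE * x := by
      have := sub_eq_zero.mp hr0
      exact this
    rw [Ideal.submodule_span_eq, Ideal.mem_span_singleton]
    exact ⟨qE, this.trans (mul_comm qE x)⟩
  · rw [Ideal.submodule_span_eq, Ideal.span_le, Set.singleton_subset_iff]
    exact hxI

instance : IsPrincipalIdealRing ↥Eis := ⟨eis_principal⟩

lemma eis_card_quot (x : ↥Eis) (a b : ℤ) (h : (x : ℂ) = mk2 a b) :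
    (Nat.card (↥Eis ⧸ Ideal.span {x}) : ℤ) = a ^ 2 - a * b + b ^ 2 := by
  have h1 : Nat.card (↥Eis ⧸ Ideal.span {x}) = Ideal.absNorm (Ideal.span {x}) := by
    rw [Ideal.absNorm_apply, Submodule.cardQuot_apply]
  rw [h1, Ideal.absNorm_span_singleton, eis_norm x a b h,
    Int.natAbs_of_nonneg (eis_norm_nonneg a b)]

lemma sqrt3_ne_zero : sqrt3 ≠ 0 := by
  intro h
  have := sqrt3_sq
  rw [h] at this
  norm_num at this

lemma sqrt3_conj : starRingEnd ℂ sqrt3 = -sqrt3 := by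
  rw [sqrt3, map_add, _root_.map_mul, zeta3_conj, _root_.map_one]
  have h2 : starRingEnd ℂ (2 : ℂ) = 2 := map_ofNat _ 2
  rw [h2]
  linear_combination 2 * zeta3_quad

/-- The "trace of `u/√-3`" of an Eisenstein integer `u = a + bζ` equals `b`. -/
lemma trace_div_sqrt3 (a b : ℤ) :
    mk2 a b / sqrt3 + starRingEnd ℂ (mk2 a b / sqrt3) = (b : ℂ) := by
  rw [map_div₀, sqrt3_conj, mk2_conj]
  have key : mk2 a b - mk2 (a - b) (-b) = (b : ℂ) * sqrt3 := by
    rw [mk2, mk2, sqrt3]; push_cast; ring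
  rw [div_neg, ← sub_eq_add_neg, ← sub_div, key, mul_div_assoc, div_self sqrt3_ne_zero, mul_one]

/-- If `I` is a nonzero ideal of `ℤ[ζ]` with norm `N(I) = |ℤ[ζ]/I|`, and
`z, w` both lie in the ideal `2I`, then `(1/4)·Tr(z·w̄/√-3)` is an integer divisible
by `N(I)`. -/
theorem statement15 (I : Ideal ↥Eis) (hI : I ≠ ⊥) (z w : ↥Eis)
    (hz : z ∈ Ideal.span {(2 : ↥Eis)} * I) (hw : w ∈ Ideal.span {(2 : ↥Eis)} * I) :
    ∃ t : ℤ, (Nat.card (↥Eis ⧸ I) : ℤ) ∣ t ∧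
      ((z : ℂ) * starRingEnd ℂ (w : ℂ) / sqrt3
          + starRingEnd ℂ ((z : ℂ) * starRingEnd ℂ (w : ℂ) / sqrt3)) / 4 = (t : ℂ) := by
  obtain ⟨x, hx⟩ := (eis_principal I).principal
  have hxI : I = Ideal.span {x} := by rw [hx, Ideal.submodule_span_eq]
  rw [hxI, Ideal.span_singleton_mul_span_singleton, Ideal.mem_span_singleton] at hz hw
  obtain ⟨a, ha⟩ := hz
  obtain ⟨b, hb⟩ := hw
  obtain ⟨x0, x1, hxr⟩ := exists_rep x.2
  obtain ⟨a0, a1, har⟩ := exists_rep a.2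
  obtain ⟨b0, b1, hbr⟩ := exists_rep b.2
  set n : ℤ := x0 ^ 2 - x0 * x1 + x1 ^ 2 with hn
  set v0 : ℤ := a0 * b0 - a0 * b1 + a1 * b1 with hv0
  set v1 : ℤ := a1 * b0 - a0 * b1 with hv1
  refine ⟨n * v1, ?_, ?_⟩
  · rw [hxI, eis_card_quot x x0 x1 hxr]
    exact ⟨v1, rfl⟩
  · have hzC : (z : ℂ) = 2 * mk2 x0 x1 * mk2 a0 a1 := by
      rw [ha]
      push_cast [hxr, har, show ((2 : ↥Eis) : ℂ) = 2 from rfl]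
      ring
    have hwConj : starRingEnd ℂ (w : ℂ) = 2 * mk2 (x0 - x1) (-x1) * mk2 (b0 - b1) (-b1) := by
      have hwC : (w : ℂ) = 2 * mk2 x0 x1 * mk2 b0 b1 := by
        rw [hb]
        push_cast [hxr, hbr, show ((2 : ↥Eis) : ℂ) = 2 from rfl]
        ring
      rw [hwC, _root_.map_mul, _root_.map_mul, mk2_conj, mk2_conj,
        map_ofNat (starRingEnd ℂ) 2]
    have hxx : mk2 x0 x1 * mk2 (x0 - x1) (-x1) = mk2 n 0 := by
      rw [mk2_mul]
      simp only [mk2, hn]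
      push_cast
      ring
    have hab2 : mk2 a0 a1 * mk2 (b0 - b1) (-b1) = mk2 v0 v1 := by
      rw [mk2_mul]
      simp only [mk2, hv0, hv1]
      push_cast
      ring
    have hnn : mk2 n 0 * mk2 v0 v1 = mk2 (n * v0) (n * v1) := by
      rw [mk2_mul]
      simp only [mk2]
      push_cast
      ring
    have hZW : (z : ℂ) * starRingEnd ℂ (w : ℂ) = 4 * mk2 (n * v0) (n * v1) := by
      calc (z : ℂ) * starRingEnd ℂ (w : ℂ)
          = 4 * ((mk2 x0 x1 * mk2 (x0 - x1) (-x1)) * (mk2 a0 a1 * mk2 (b0 - b1) (-b1))) := by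
            rw [hzC, hwConj]; ring
        _ = 4 * mk2 (n * v0) (n * v1) := by rw [hxx, hab2, hnn]
    rw [hZW]
    have hsplit : (4 : ℂ) * mk2 (n * v0) (n * v1) / sqrt3
        + starRingEnd ℂ (4 * mk2 (n * v0) (n * v1) / sqrt3)
        = 4 * (mk2 (n * v0) (n * v1) / sqrt3
            + starRingEnd ℂ (mk2 (n * v0) (n * v1) / sqrt3)) := by
      rw [mul_div_assoc, _root_.map_mul, map_ofNat (starRingEnd ℂ) 4]
      ring
    rw [hsplit, trace_div_sqrt3]
    push_cast
    ring
end
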